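/- Let α > 0, a > 0, let κ₀ be the unique solution in (α/2, ∞) of (α/2)·exp(−2κa) = κ − α/2, and set ξ₀ := −κ₀². Define φ₀ : ℝ → ℝ by φ₀(x) := cosh(κ₀ x) for |x| ≤ a and φ₀(x) := cosh(κ₀ a)·exp(−κ₀(|x| − a)) for |x| > a. Then φ₀ is continuous, positive, bounded and square-integrable on ℝ, twice differentiable at every x ∉ {−a, a} with −φ₀''(x) = ξ₀ φ₀(x) there, its derivative has one-sided limits at ±a, and φ₀'(a+0) − φ₀'(a−0) = −αφ₀(a) and φ₀'(−a+0) − φ₀'(−a−0) = −αφ₀(−a). -/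

import Mathlib

open Filter Topology MeasureTheory

/-- the explicit even function `φ₀` is the positive, bounded,
square-integrable ground-state eigenfunction, with eigenvalue `ξ₀ = −κ₀²`,
of the one-dimensional operator with two delta interactions of strength `α`
at `±a`. -/
theorem ground_state_eigenfunction
    (α a κ₀ ξ₀ : ℝ) (hα : 0 < α) (ha : 0 < a)
    (hκ₀ : κ₀ ∈ Set.Ioi (α / 2) ∧
      (α / 2) * Real.exp (-2 * κ₀ * a) = κ₀ - α / 2)
    (hξ₀ : ξ₀ = -κ₀ ^ 2)
    (φ₀ : ℝ → ℝ)
    (hφ₀ : ∀ x : ℝ, φ₀ x =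
      if |x| ≤ a then Real.cosh (κ₀ * x)
      else Real.cosh (κ₀ * a) * Real.exp (-κ₀ * (|x| - a))) :
    Continuous φ₀ ∧
    (∀ x : ℝ, 0 < φ₀ x) ∧
    (∃ C : ℝ, ∀ x : ℝ, |φ₀ x| ≤ C) ∧
    Integrable (fun x : ℝ => (φ₀ x) ^ 2) ∧
    (∀ x : ℝ, x ≠ -a → x ≠ a →
      DifferentiableAt ℝ φ₀ x ∧ DifferentiableAt ℝ (deriv φ₀) x ∧
      -deriv (deriv φ₀) x = ξ₀ * φ₀ x) ∧
    (∃ Lpa Lma Lpb Lmb : ℝ,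
      Tendsto (deriv φ₀) (𝓝[>] a) (𝓝 Lpa) ∧
      Tendsto (deriv φ₀) (𝓝[<] a) (𝓝 Lma) ∧
      Tendsto (deriv φ₀) (𝓝[>] (-a)) (𝓝 Lpb) ∧
      Tendsto (deriv φ₀) (𝓝[<] (-a)) (𝓝 Lmb) ∧
      Lpa - Lma = -α * φ₀ a ∧
      Lpb - Lmb = -α * φ₀ (-a)) := by
  have hκpos : 0 < κ₀ := lt_trans (half_pos hα) hκ₀.1
  set C : ℝ := Real.cosh (κ₀ * a) with hC
  -- uniform representation
  have hrep : ∀ x : ℝ, φ₀ x =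
      Real.cosh (κ₀ * min |x| a) * Real.exp (-κ₀ * max (|x| - a) 0) := by
    intro x
    rw [hφ₀ x]
    by_cases h : |x| ≤ a
    · rw [if_pos h, min_eq_left h, max_eq_right (by linarith)]
      have : κ₀ * |x| = |κ₀ * x| := by
        rw [abs_mul, abs_of_pos hκpos]
      rw [this, Real.cosh_abs, mul_zero, Real.exp_zero, mul_one]
    · rw [if_neg h, min_eq_right (le_of_not_ge h),
        max_eq_left (by push_neg at h; linarith)]
  have hcont : Continuous φ₀ := by
    have : Continuous fun x : ℝ =>
        Real.cosh (κ₀ * min |x| a) * Real.exp (-κ₀ * max (|x| - a) 0) := by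
      fun_prop
    exact this.congr fun x => (hrep x).symm
  have hpos : ∀ x : ℝ, 0 < φ₀ x := by
    intro x; rw [hrep x]
    exact mul_pos (Real.cosh_pos _) (Real.exp_pos _)
  have hbound : ∀ x : ℝ, |φ₀ x| ≤ C := by
    intro x
    rw [abs_of_pos (hpos x), hrep x]
    have h1 : Real.cosh (κ₀ * min |x| a) ≤ C := by
      rw [hC]
      apply Real.cosh_le_cosh.2
      rw [abs_of_nonneg (mul_nonneg hκpos.le (le_min (abs_nonneg x) ha.le)),
        abs_of_nonneg (mul_nonneg hκpos.le ha.le)]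
      exact mul_le_mul_of_nonneg_left (min_le_right _ _) hκpos.le
    have h2 : Real.exp (-κ₀ * max (|x| - a) 0) ≤ 1 := by
      apply Real.exp_le_one_iff.2
      have := le_max_right (|x| - a) (0:ℝ)
      nlinarith [le_max_right (|x| - a) (0:ℝ)]
    calc Real.cosh (κ₀ * min |x| a) * Real.exp (-κ₀ * max (|x| - a) 0)
        ≤ C * 1 := by
          apply mul_le_mul h1 h2 (Real.exp_pos _).le (Real.cosh_pos _).le
      _ = C := mul_one C
  -- integrability
  have hint : Integrable (fun x : ℝ => (φ₀ x) ^ 2) := by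
    have h2κ : (0:ℝ) < 2 * κ₀ := by linarith
    set G : ℝ → ℝ := fun x => Real.exp (-(2 * κ₀) * |x|) with hG
    have hGint : Integrable G := by
      have hIoi : IntegrableOn G (Set.Ioi (0:ℝ)) := by
        apply (exp_neg_integrableOn_Ioi 0 h2κ).congr_fun _ measurableSet_Ioi
        intro y hy
        simp only [hG, abs_of_pos (Set.mem_Ioi.1 hy)]
      have hIio : IntegrableOn G (Set.Iio (0:ℝ)) := by
        rw [← (Measure.measurePreserving_neg (volume : Measure ℝ)).integrableOn_comp_preimage
            (Homeomorph.neg ℝ).measurableEmbedding]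
        have hpre : (fun x : ℝ => -x) ⁻¹' Set.Iio 0 = Set.Ioi 0 := by ext y; simp
        have hcomp : (G ∘ fun x : ℝ => -x) = G := by funext y; simp [hG]
        rw [show (Neg.neg : ℝ → ℝ) = fun x : ℝ => -x from rfl, hpre, hcomp]
        exact hIoi
      have : IntegrableOn G (Set.Iio 0 ∪ Set.Ici 0) := by
        rw [integrableOn_union]
        exact ⟨hIio, (integrableOn_Ici_iff_integrableOn_Ioi (f := G)).2 hIoi⟩
      rwa [Set.Iio_union_Ici, integrableOn_univ] at this
    set K : ℝ := C ^ 2 * Real.exp (2 * κ₀ * a) with hK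
    have hdom : ∀ x : ℝ, (φ₀ x) ^ 2 ≤ K * G x := by
      intro x
      rw [hrep x, hG, hK]
      by_cases h : |x| ≤ a
      · rw [min_eq_left h, max_eq_right (by linarith), mul_zero,
          Real.exp_zero, mul_one]
        have h1 : Real.cosh (κ₀ * |x|) ≤ C := by
          rw [hC]
          apply Real.cosh_le_cosh.2
          rw [abs_of_nonneg (mul_nonneg hκpos.le (abs_nonneg x)),
            abs_of_nonneg (mul_nonneg hκpos.le ha.le)]
          exact mul_le_mul_of_nonneg_left h hκpos.le
        have h2 : (1:ℝ) ≤ Real.exp (2 * κ₀ * a) * Real.exp (-(2 * κ₀) * |x|) := by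
          rw [← Real.exp_add, ← Real.exp_zero]
          apply Real.exp_le_exp.2
          nlinarith [abs_nonneg x]
        have hc : 0 < Real.cosh (κ₀ * |x|) := Real.cosh_pos _
        nlinarith [Real.cosh_pos (κ₀ * a), sq_nonneg (Real.cosh (κ₀ * |x|))]
      · push_neg at h
        rw [min_eq_right h.le, max_eq_left (by linarith)]
        have he : Real.exp (-κ₀ * (|x| - a)) ^ 2
            = Real.exp (2 * κ₀ * a) * Real.exp (-(2 * κ₀) * |x|) := by
          rw [sq, ← Real.exp_add, ← Real.exp_add]
          congr 1; ring
        have : (Real.cosh (κ₀ * a) * Real.exp (-κ₀ * (|x| - a))) ^ 2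
            = C ^ 2 * (Real.exp (2 * κ₀ * a) * Real.exp (-(2 * κ₀) * |x|)) := by
          rw [mul_pow, he, hC]
        exact le_of_eq (this.trans (mul_assoc _ _ _).symm)
    apply (hGint.const_mul K).mono'
      ((hcont.pow 2).aestronglyMeasurable)
    filter_upwards with x
    rw [Real.norm_eq_abs, abs_of_nonneg (sq_nonneg _)]
    exact hdom x
  -- local formulas
  have hopen : IsOpen {y : ℝ | |y| < a} := isOpen_lt continuous_abs continuous_const
  have hmid : ∀ x : ℝ, |x| < a → φ₀ =ᶠ[𝓝 x] fun y => Real.cosh (κ₀ * y) := by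
    intro x hx
    filter_upwards [hopen.mem_nhds hx] with y hy
    rw [hφ₀ y, if_pos (le_of_lt hy)]
  have hright : ∀ x : ℝ, a < x →
      φ₀ =ᶠ[𝓝 x] fun y => C * Real.exp (-κ₀ * (y - a)) := by
    intro x hx
    filter_upwards [Ioi_mem_nhds hx] with y hy
    have h1 : |y| = y := abs_of_pos (lt_trans ha hy)
    rw [hφ₀ y, if_neg (by rw [h1]; exact not_le.mpr hy), h1]
  have hleft : ∀ x : ℝ, x < -a →
      φ₀ =ᶠ[𝓝 x] fun y => C * Real.exp (κ₀ * (y + a)) := by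
    intro x hx
    filter_upwards [Iio_mem_nhds hx] with y hy
    have h1 : |y| = -y := abs_of_neg (by linarith [Set.mem_Iio.1 hy])
    have h2 : ¬ |y| ≤ a := by rw [h1]; push_neg; linarith [Set.mem_Iio.1 hy]
    rw [hφ₀ y, if_neg h2, h1]
    congr 1; ring
  -- explicit derivatives of the model functions
  have hdf1 : ∀ y : ℝ, HasDerivAt (fun z => Real.cosh (κ₀ * z))
      (Real.sinh (κ₀ * y) * κ₀) y := by
    intro y
    have h : HasDerivAt (fun z : ℝ => κ₀ * z) κ₀ y := by
      simpa using (hasDerivAt_id y).const_mul κ₀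
    exact h.cosh
  have hdf1' : ∀ y : ℝ, HasDerivAt (fun z => Real.sinh (κ₀ * z) * κ₀)
      (Real.cosh (κ₀ * y) * κ₀ * κ₀) y := by
    intro y
    have h : HasDerivAt (fun z : ℝ => κ₀ * z) κ₀ y := by
      simpa using (hasDerivAt_id y).const_mul κ₀
    exact h.sinh.mul_const κ₀
  have hdf2 : ∀ y : ℝ, HasDerivAt (fun z => C * Real.exp (-κ₀ * (z - a)))
      (C * Real.exp (-κ₀ * (y - a)) * (-κ₀)) y := by
    intro y
    have h : HasDerivAt (fun z : ℝ => -κ₀ * (z - a)) (-κ₀) y := by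
      simpa using ((hasDerivAt_id y).sub_const a).const_mul (-κ₀)
    have := (h.exp.const_mul C)
    exact this.congr_deriv (by ring)
  have hdf2' : ∀ y : ℝ, HasDerivAt (fun z => C * Real.exp (-κ₀ * (z - a)) * (-κ₀))
      (C * Real.exp (-κ₀ * (y - a)) * (-κ₀) * (-κ₀)) y := by
    intro y
    exact (hdf2 y).mul_const (-κ₀)
  have hdf3 : ∀ y : ℝ, HasDerivAt (fun z => C * Real.exp (κ₀ * (z + a)))
      (C * Real.exp (κ₀ * (y + a)) * κ₀) y := by
    intro y
    have h : HasDerivAt (fun z : ℝ => κ₀ * (z + a)) κ₀ y := by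
      simpa using ((hasDerivAt_id y).add_const a).const_mul κ₀
    have := (h.exp.const_mul C)
    exact this.congr_deriv (by ring)
  have hdf3' : ∀ y : ℝ, HasDerivAt (fun z => C * Real.exp (κ₀ * (z + a)) * κ₀)
      (C * Real.exp (κ₀ * (y + a)) * κ₀ * κ₀) y := by
    intro y
    exact (hdf3 y).mul_const κ₀
  -- values of deriv φ₀ off the singular points
  have hdmid : ∀ y : ℝ, |y| < a → deriv φ₀ y = Real.sinh (κ₀ * y) * κ₀ := by
    intro y hy
    rw [(hmid y hy).deriv_eq]
    exact (hdf1 y).deriv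
  have hdright : ∀ y : ℝ, a < y →
      deriv φ₀ y = C * Real.exp (-κ₀ * (y - a)) * (-κ₀) := by
    intro y hy
    rw [(hright y hy).deriv_eq]
    exact (hdf2 y).deriv
  have hdleft : ∀ y : ℝ, y < -a →
      deriv φ₀ y = C * Real.exp (κ₀ * (y + a)) * κ₀ := by
    intro y hy
    rw [(hleft y hy).deriv_eq]
    exact (hdf3 y).deriv
  -- eventual equality of deriv φ₀ with model derivatives
  have hd2mid : ∀ x : ℝ, |x| < a →
      deriv φ₀ =ᶠ[𝓝 x] fun y => Real.sinh (κ₀ * y) * κ₀ := by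
    intro x hx
    filter_upwards [hopen.mem_nhds hx] with y hy
    exact hdmid y hy
  have hd2right : ∀ x : ℝ, a < x →
      deriv φ₀ =ᶠ[𝓝 x] fun y => C * Real.exp (-κ₀ * (y - a)) * (-κ₀) := by
    intro x hx
    filter_upwards [Ioi_mem_nhds hx] with y hy
    exact hdright y hy
  have hd2left : ∀ x : ℝ, x < -a →
      deriv φ₀ =ᶠ[𝓝 x] fun y => C * Real.exp (κ₀ * (y + a)) * κ₀ := by
    intro x hx
    filter_upwards [Iio_mem_nhds hx] with y hy
    exact hdleft y hy
  refine ⟨hcont, hpos, ⟨C, hbound⟩, hint, ?_, ?_⟩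
  · -- eigenvalue equation away from ±a
    intro x hxm hxp
    rcases lt_trichotomy (|x|) a with hlt | heq | hgt
    · refine ⟨?_, ?_, ?_⟩
      · exact (Filter.EventuallyEq.differentiableAt_iff (hmid x hlt)).2
          (hdf1 x).differentiableAt
      · exact (Filter.EventuallyEq.differentiableAt_iff (hd2mid x hlt)).2
          (hdf1' x).differentiableAt
      · rw [(hd2mid x hlt).deriv_eq, (hdf1' x).deriv, hφ₀ x, if_pos hlt.le, hξ₀]
        ring
    · rcases abs_eq ha.le |>.1 heq with h | h
      · exact absurd h hxp
      · exact absurd h hxm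
    · rcases lt_abs.1 hgt with hx | hx
      · refine ⟨?_, ?_, ?_⟩
        · exact (Filter.EventuallyEq.differentiableAt_iff (hright x hx)).2
            (hdf2 x).differentiableAt
        · exact (Filter.EventuallyEq.differentiableAt_iff (hd2right x hx)).2
            (hdf2' x).differentiableAt
        · have h1 : |x| = x := abs_of_pos (lt_trans ha hx)
          rw [(hd2right x hx).deriv_eq, (hdf2' x).deriv, hφ₀ x,
            if_neg (by rw [h1]; exact not_le.mpr hx), h1, hξ₀, hC]
          ring
      · have hx' : x < -a := by linarith
        refine ⟨?_, ?_, ?_⟩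
        · exact (Filter.EventuallyEq.differentiableAt_iff (hleft x hx')).2
            (hdf3 x).differentiableAt
        · exact (Filter.EventuallyEq.differentiableAt_iff (hd2left x hx')).2
            (hdf3' x).differentiableAt
        · have h1 : |x| = -x := abs_of_neg (by linarith)
          have h2 : ¬ |x| ≤ a := by rw [h1]; push_neg; linarith
          have h3 : -κ₀ * (|x| - a) = κ₀ * (x + a) := by rw [h1]; ring
          rw [(hd2left x hx').deriv_eq, (hdf3' x).deriv, hφ₀ x, if_neg h2, h3,
            hξ₀, hC]
          ring
  · -- one-sided limits and jump conditions
    refine ⟨C * Real.exp (-κ₀ * (a - a)) * (-κ₀), Real.sinh (κ₀ * a) * κ₀,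
      Real.sinh (κ₀ * (-a)) * κ₀, C * Real.exp (κ₀ * (-a + a)) * κ₀,
      ?_, ?_, ?_, ?_, ?_, ?_⟩
    · have hc : Continuous fun y => C * Real.exp (-κ₀ * (y - a)) * (-κ₀) := by
        fun_prop
      refine Tendsto.congr' ?_ ((hc.tendsto a).mono_left nhdsWithin_le_nhds)
      filter_upwards [self_mem_nhdsWithin] with y hy
      exact (hdright y hy).symm
    · have hc : Continuous fun y => Real.sinh (κ₀ * y) * κ₀ := by fun_prop
      refine Tendsto.congr' ?_ ((hc.tendsto a).mono_left nhdsWithin_le_nhds)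
      filter_upwards [Ioo_mem_nhdsLT_of_mem (show a ∈ Set.Ioc (-a) a from ⟨by linarith, le_refl a⟩)]
        with y hy
      exact (hdmid y (abs_lt.2 ⟨hy.1, hy.2⟩)).symm
    · have hc : Continuous fun y => Real.sinh (κ₀ * y) * κ₀ := by fun_prop
      refine Tendsto.congr' ?_ ((hc.tendsto (-a)).mono_left nhdsWithin_le_nhds)
      filter_upwards [Ioo_mem_nhdsGT_of_mem (show -a ∈ Set.Ico (-a) a from ⟨le_refl (-a), by linarith⟩)]
        with y hy
      exact (hdmid y (abs_lt.2 ⟨hy.1, hy.2⟩)).symm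
    · have hc : Continuous fun y => C * Real.exp (κ₀ * (y + a)) * κ₀ := by fun_prop
      refine Tendsto.congr' ?_ ((hc.tendsto (-a)).mono_left nhdsWithin_le_nhds)
      filter_upwards [self_mem_nhdsWithin] with y hy
      exact (hdleft y hy).symm
    · have hEF : Real.exp (κ₀ * a) * Real.exp (-(κ₀ * a)) = 1 := by
        rw [← Real.exp_add]; simp
      have hsq : Real.exp (-2 * κ₀ * a) = Real.exp (-(κ₀ * a)) * Real.exp (-(κ₀ * a)) := by
        rw [← Real.exp_add]; congr 1; ring
      have hκ2 := hκ₀.2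
      rw [hsq] at hκ2
      have hφa : φ₀ a = Real.cosh (κ₀ * a) := by
        rw [hφ₀ a, if_pos (by rw [abs_of_pos ha])]
      rw [hφa, hC, sub_self, mul_zero, Real.exp_zero, mul_one,
        Real.cosh_eq, Real.sinh_eq]
      linear_combination Real.exp (κ₀ * a) * hκ2 - (α / 2) * Real.exp (-(κ₀ * a)) * hEF
    · have hEF : Real.exp (κ₀ * a) * Real.exp (-(κ₀ * a)) = 1 := by
        rw [← Real.exp_add]; simp
      have hsq : Real.exp (-2 * κ₀ * a) = Real.exp (-(κ₀ * a)) * Real.exp (-(κ₀ * a)) := by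
        rw [← Real.exp_add]; congr 1; ring
      have hκ2 := hκ₀.2
      rw [hsq] at hκ2
      have hφa : φ₀ (-a) = Real.cosh (κ₀ * a) := by
        rw [hφ₀ (-a), if_pos (by rw [abs_neg, abs_of_pos ha])]
        rw [show κ₀ * -a = -(κ₀ * a) by ring, Real.cosh_neg]
      rw [hφa, hC, show κ₀ * -a = -(κ₀ * a) by ring, Real.sinh_neg,
        neg_add_cancel, mul_zero, Real.exp_zero, mul_one,
        Real.cosh_eq, Real.sinh_eq]
      linear_combination Real.exp (κ₀ * a) * hκ2 - (α / 2) * Real.exp (-(κ₀ * a)) * hEF
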